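/- Let E be a real normed vector space, U ⊆ E open, and Φ : E → ℍ differentiable at a point x ∈ U with imaginary values on U (re(Φ y) = 0 for all y ∈ U) and Φ x ≠ 0. Then the function y ↦ ‖Φ y‖ is differentiable at x, and for every imaginary quaternion a (re a = 0) and every v ∈ E: |fderiv ℝ (fun y => ‖Φ y‖) x v| ≤ ‖fderiv ℝ Φ x v + a * Φ x − Φ x * a‖. In particular, |d|Φ|| ≤ |d_AΦ| pointwise for any su(2)-valued connection one-form A. -/

import Mathlib

open scoped RealInnerProductSpace

/-- For imaginary quaternions `p`, `a`, the commutator `[a, p]` is orthogonal to `p`. -/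
lemma inner_commutator_eq_zero (a p : Quaternion ℝ) (ha : a.re = 0) (hp : p.re = 0) :
    ⟪p, a * p - p * a⟫ = 0 := by
  simp only [Quaternion.inner_def, star_sub, star_mul, mul_sub, Quaternion.re_sub,
    Quaternion.re_mul, Quaternion.re_star, Quaternion.imI_star, Quaternion.imJ_star,
    Quaternion.imK_star, Quaternion.imI_mul, Quaternion.imJ_mul, Quaternion.imK_mul, ha, hp]
  ring

/-- Pointwise bound `|d|Φ|| ≤ |d_AΦ|`: if `Φ` is imaginary-quaternion-valued on an open set
`U`, differentiable at `x ∈ U` with `Φ x ≠ 0`, then `‖Φ ·‖` is differentiable at `x`, and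
for any imaginary quaternion `a` (the value `A(v)` of a connection one-form) and any
direction `v`, `|d‖Φ‖(v)| ≤ ‖dΦ(v) + [a, Φ x]‖`. -/
theorem norm_deriv_le_covariant_deriv {E : Type*} [NormedAddCommGroup E] [NormedSpace ℝ E]
    (U : Set E) (hU : IsOpen U) (x : E) (hx : x ∈ U)
    (Φ : E → Quaternion ℝ) (hΦ : DifferentiableAt ℝ Φ x)
    (hΦim : ∀ y ∈ U, (Φ y).re = 0) (hne : Φ x ≠ 0) :
    DifferentiableAt ℝ (fun y => ‖Φ y‖) x ∧
    ∀ a : Quaternion ℝ, a.re = 0 → ∀ v : E,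
      |fderiv ℝ (fun y => ‖Φ y‖) x v| ≤ ‖fderiv ℝ Φ x v + a * Φ x - Φ x * a‖ := by
  have hd : HasFDerivAt Φ (fderiv ℝ Φ x) x := hΦ.hasFDerivAt
  have hpos : (0:ℝ) < ‖Φ x‖ := norm_pos_iff.2 hne
  have h1 : HasFDerivAt (‖Φ ·‖ ^ 2) (2 • (innerSL ℝ (Φ x)).comp (fderiv ℝ Φ x)) x :=
    hd.norm_sq
  have hne2 : ‖Φ x‖ ^ 2 ≠ 0 := pow_ne_zero 2 hpos.ne'
  have h2 := h1.sqrt hne2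
  have h3 : HasFDerivAt (fun y => ‖Φ y‖)
      ((1 / (2 * ‖Φ x‖)) • (2 • (innerSL ℝ (Φ x)).comp (fderiv ℝ Φ x))) x := by
    have heq : (fun y => Real.sqrt (‖Φ y‖ ^ 2)) = fun y => ‖Φ y‖ := by
      funext y; exact Real.sqrt_sq (norm_nonneg _)
    rw [heq] at h2
    rwa [Real.sqrt_sq (norm_nonneg _)] at h2
  have hfd : fderiv ℝ (fun y => ‖Φ y‖) x
      = (1 / (2 * ‖Φ x‖)) • (2 • (innerSL ℝ (Φ x)).comp (fderiv ℝ Φ x)) := h3.fderiv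
  refine ⟨h3.differentiableAt, fun a ha v => ?_⟩
  have hval : fderiv ℝ (fun y => ‖Φ y‖) x v = ⟪Φ x, fderiv ℝ Φ x v⟫ / ‖Φ x‖ := by
    rw [hfd]
    simp only [ContinuousLinearMap.smul_apply, ContinuousLinearMap.coe_smul',
      Pi.smul_apply, ContinuousLinearMap.comp_apply, innerSL_apply_apply, smul_eq_mul,
      ContinuousLinearMap.smul_apply]
    field_simp
    ring
  rw [hval]
  have hkey : ⟪Φ x, fderiv ℝ Φ x v⟫
      = ⟪Φ x, fderiv ℝ Φ x v + a * Φ x - Φ x * a⟫ := by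
    rw [add_sub_assoc, inner_add_right, inner_commutator_eq_zero a (Φ x) ha (hΦim x hx),
      add_zero]
  rw [hkey, abs_div, abs_of_pos hpos, div_le_iff₀ hpos]
  calc |⟪Φ x, fderiv ℝ Φ x v + a * Φ x - Φ x * a⟫|
      ≤ ‖Φ x‖ * ‖fderiv ℝ Φ x v + a * Φ x - Φ x * a‖ := abs_real_inner_le_norm _ _
    _ = ‖fderiv ℝ Φ x v + a * Φ x - Φ x * a‖ * ‖Φ x‖ := mul_comm _ _
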